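/- Existence of an admissible three-soliton configuration for fast rates: for every ν > 8, defining f : (0,1) → ℝ by f(z) = ((1+z)^{ν/2}/(2z))·(1−z²)^{(2−ν)/4} and g : (0,1) → ℝ by g(z) = (8/ν)·f(z)² − ν/4 − f(2z/(1+z²)), there exists z ∈ (0,1) such that g(z) = 0. (g is continuous, g(z) → +∞ as z → 0⁺, and g(z) → −∞ as z → 1⁻ because the coefficient 8/ν − 1 is negative for ν > 8.) -/

import Mathlib

open Set Filter Topology

noncomputable section

/-- The interaction coefficient
`f(z) = ((1+z)^{ν/2}/(2z)) (1-z²)^{(2-ν)/4} = ((1+|z|)^{ν/2}/(2|z|)) γ_z^{ν/2-1}`. -/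
def fadm (ν z : ℝ) : ℝ := ((1 + z) ^ (ν / 2) / (2 * z)) * (1 - z ^ 2) ^ ((2 - ν) / 4)

/-- The admissibility function for the symmetric three-soliton configuration with
velocities `(-z,0,0)`, `(0,0,0)`, `(z,0,0)`:
`g(z) = (8/ν) f(z)² - ν/4 - f(2z/(1+z²))`, where `2z/(1+z²)` is the relativistic
relative speed of the two outer solitons. -/
def gadm (ν z : ℝ) : ℝ :=
  (8 / ν) * fadm ν z ^ 2 - ν / 4 - fadm ν (2 * z / (1 + z ^ 2))

/-- rpow with negative exponent blows up at `0⁺`. -/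
lemma rpow_neg_exp_tendsto_atTop {c : ℝ} (hc : c < 0) :
    Tendsto (fun x : ℝ => x ^ c) (nhdsWithin 0 (Ioi 0)) atTop := by
  have h := (tendsto_rpow_atTop (y := -c) (by linarith)).comp tendsto_inv_nhdsGT_zero
  refine h.congr' ?_
  filter_upwards [eventually_mem_nhdsWithin] with x hx
  have hx0 : (0:ℝ) < x := hx
  rw [Function.comp_apply, Real.inv_rpow hx0.le, Real.rpow_neg hx0.le, inv_inv]

/-- The relativistic speed map sends `(0,1)` into itself. -/
lemma wmap_mem {z : ℝ} (hz : z ∈ Ioo (0:ℝ) 1) : 2 * z / (1 + z ^ 2) ∈ Ioo (0:ℝ) 1 := by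
  obtain ⟨h0, h1⟩ := hz
  have hden : (0:ℝ) < 1 + z ^ 2 := by positivity
  constructor
  · positivity
  · rw [div_lt_one hden]; nlinarith [sq_nonneg (1 - z)]

/-- Existence of an admissible three-soliton configuration for fast rates: for every
`ν > 8` there is `z ∈ (0,1)` with `g(z) = 0`. -/
theorem stmt16 (ν : ℝ) (hν : 8 < ν) :
    ∃ z ∈ Ioo (0 : ℝ) 1, gadm ν z = 0 := by
  have hν0 : (0:ℝ) < ν := by linarith
  set s : Set ℝ := Ioo (0:ℝ) 1 with hs
  -- basic positivity facts on s
  have hfacts : ∀ z ∈ s, (0:ℝ) < z ∧ z < 1 ∧ (0:ℝ) < 1 + z ∧ (0:ℝ) < 1 - z ^ 2 ∧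
      (0:ℝ) < 1 + z ^ 2 := by
    rintro z ⟨h0, h1⟩
    refine ⟨h0, h1, by linarith, by nlinarith, by positivity⟩
  -- continuity of fadm on s
  have cont_f : ContinuousOn (fadm ν) s := by
    apply ContinuousOn.mul
    · apply ContinuousOn.div
      · exact (continuousOn_const.add continuousOn_id).rpow_const
          fun z hz => Or.inl (ne_of_gt (hfacts z hz).2.2.1)
      · fun_prop
      · intro z hz; have := (hfacts z hz).1; positivity
    · exact (continuousOn_const.sub (continuousOn_id.pow 2)).rpow_const
        fun z hz => Or.inl (ne_of_gt (hfacts z hz).2.2.2.1)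
  have cont_w : ContinuousOn (fun z : ℝ => 2 * z / (1 + z ^ 2)) s := by
    apply ContinuousOn.div
    · fun_prop
    · fun_prop
    · intro z hz; exact ne_of_gt (hfacts z hz).2.2.2.2
  have cont_g : ContinuousOn (gadm ν) s := by
    apply ContinuousOn.sub
    · apply ContinuousOn.sub
      · exact continuousOn_const.mul (cont_f.pow 2)
      · exact continuousOn_const
    · exact cont_f.comp cont_w fun z hz => wmap_mem hz
  -- the profile function P and its behaviour at 0
  set P : ℝ → ℝ := fun z => (1 + z) ^ (ν/2) * (1 - z ^ 2) ^ ((2 - ν)/4) with hPdef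
  have hPc : ContinuousAt P 0 := by
    apply ContinuousAt.mul
    · exact (continuousAt_const.add continuousAt_id).rpow_const (Or.inl (by norm_num))
    · exact (continuousAt_const.sub (continuousAt_id.pow 2)).rpow_const (Or.inl (by norm_num))
  have hP0 : P 0 = 1 := by simp [hPdef]
  have hwc0 : ContinuousAt (fun z : ℝ => 2 * z / (1 + z ^ 2)) 0 := by
    apply ContinuousAt.div
    · fun_prop
    · fun_prop
    · norm_num
  -- limit of gadm at 0⁺ : +∞
  have lim0 : Tendsto (gadm ν) (nhdsWithin 0 s) atTop := by
    have tinv : Tendsto (fun z : ℝ => 1/z) (nhdsWithin 0 s) atTop := by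
      simp only [one_div]
      exact tendsto_inv_nhdsGT_zero.mono_left (nhdsWithin_mono 0 Ioo_subset_Ioi_self)
    have t1 : Tendsto (fun z : ℝ => (2/ν) * (P z) ^ 2) (nhdsWithin 0 s) (𝓝 (2/ν)) := by
      have hc : ContinuousAt (fun z : ℝ => (2/ν) * (P z) ^ 2) 0 :=
        continuousAt_const.mul (hPc.pow 2)
      have h : Tendsto (fun z : ℝ => (2/ν) * (P z) ^ 2) (nhdsWithin 0 s)
          (𝓝 ((2/ν) * (P 0) ^ 2)) := hc.tendsto.mono_left nhdsWithin_le_nhds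
      simpa [hP0] using h
    have t2 : Tendsto (fun z : ℝ => -(P (2 * z / (1 + z ^ 2)) * (1 + z ^ 2) / 4))
        (nhdsWithin 0 s) (𝓝 (-(1/4))) := by
      have hc : ContinuousAt (fun z : ℝ => -(P (2 * z / (1 + z ^ 2)) * (1 + z ^ 2) / 4)) 0 := by
        apply ContinuousAt.neg
        apply ContinuousAt.div_const
        apply ContinuousAt.mul
        · have hPc' : ContinuousAt P (2 * (0:ℝ) / (1 + 0 ^ 2)) := by
            rw [show (2 * (0:ℝ) / (1 + 0 ^ 2)) = 0 by norm_num]; exact hPc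
          have hcomp : ContinuousAt (P ∘ (fun z : ℝ => 2 * z / (1 + z ^ 2))) 0 :=
            ContinuousAt.comp (f := fun z : ℝ => 2 * z / (1 + z ^ 2)) (x := (0:ℝ)) hPc' hwc0
          exact hcomp
        · fun_prop
      have h : Tendsto (fun z : ℝ => -(P (2 * z / (1 + z ^ 2)) * (1 + z ^ 2) / 4))
          (nhdsWithin 0 s) (𝓝 (-(P (2 * 0 / (1 + 0 ^ 2)) * (1 + 0 ^ 2) / 4))) :=
        hc.tendsto.mono_left nhdsWithin_le_nhds
      have hval : -(P (2 * (0:ℝ) / (1 + 0 ^ 2)) * (1 + (0:ℝ) ^ 2) / 4) = -(1/4) := by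
        rw [show (2 * (0:ℝ) / (1 + 0 ^ 2)) = 0 by norm_num, hP0]; norm_num
      rwa [hval] at h
    have hbr : Tendsto (fun z : ℝ => (2/ν) * (P z) ^ 2 * (1/z) +
        -(P (2 * z / (1 + z ^ 2)) * (1 + z ^ 2) / 4)) (nhdsWithin 0 s) atTop :=
      (Tendsto.pos_mul_atTop (by positivity) t1 tinv).atTop_add t2
    have hG : Tendsto (fun z : ℝ => (1/z) * ((2/ν) * (P z) ^ 2 * (1/z) +
        -(P (2 * z / (1 + z ^ 2)) * (1 + z ^ 2) / 4)) + -(ν/4)) (nhdsWithin 0 s) atTop :=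
      tendsto_atTop_add_const_right _ _ (tinv.atTop_mul_atTop₀ hbr)
    refine hG.congr' ?_
    filter_upwards [eventually_mem_nhdsWithin] with z hz
    obtain ⟨hz0, hz1, h1pz, h1z2, hden⟩ := hfacts z hz
    have hw0 : (0:ℝ) < 2 * z / (1 + z ^ 2) := (wmap_mem hz).1
    have hz0' : z ≠ 0 := hz0.ne'
    have hden' : (1 + z ^ 2) ≠ 0 := hden.ne'
    have hw0' : 2 * z / (1 + z ^ 2) ≠ 0 := hw0.ne'
    simp only [gadm, fadm, hPdef]
    field_simp
    ring
  -- limit of gadm at 1⁻ : -∞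
  set Q : ℝ → ℝ := fun z => (1 + z) ^ (ν/2) / (2 * z) with hQdef
  set D : ℝ → ℝ := fun z =>
    8/ν * Q z ^ 2 - Q (2 * z / (1 + z ^ 2)) * (1 + z ^ 2) ^ ((ν - 2)/2) with hDdef
  have hQc : ContinuousAt Q 1 := by
    apply ContinuousAt.div
    · exact (continuousAt_const.add continuousAt_id).rpow_const (Or.inl (by norm_num))
    · fun_prop
    · norm_num
  have hwc1 : ContinuousAt (fun z : ℝ => 2 * z / (1 + z ^ 2)) 1 := by
    apply ContinuousAt.div
    · fun_prop
    · fun_prop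
    · norm_num
  have hDc : ContinuousAt D 1 := by
    apply ContinuousAt.sub
    · exact continuousAt_const.mul (hQc.pow 2)
    · apply ContinuousAt.mul
      · have hQc' : ContinuousAt Q (2 * (1:ℝ) / (1 + 1 ^ 2)) := by
          rw [show (2 * (1:ℝ) / (1 + 1 ^ 2)) = 1 by norm_num]; exact hQc
        have hcomp : ContinuousAt (Q ∘ (fun z : ℝ => 2 * z / (1 + z ^ 2))) 1 :=
          ContinuousAt.comp (f := fun z : ℝ => 2 * z / (1 + z ^ 2)) (x := (1:ℝ)) hQc' hwc1
        exact hcomp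
      · exact (continuousAt_const.add (continuousAt_id.pow 2)).rpow_const (Or.inl (by norm_num))
  have hQ1 : Q 1 = (2:ℝ) ^ (ν/2) / 2 := by norm_num [hQdef]
  have hD1 : D 1 = 8/ν * ((2:ℝ) ^ (ν/2) / 2) ^ 2 - ((2:ℝ) ^ (ν/2) / 2) * (2:ℝ) ^ ((ν - 2)/2) := by
    have hw1 : 2 * (1:ℝ) / (1 + 1 ^ 2) = 1 := by norm_num
    simp only [hDdef, hw1, hQ1]
    norm_num
  have hL : D 1 < 0 := by
    rw [hD1]
    have hA2 : (2:ℝ) ^ (ν/2) * (2:ℝ) ^ (ν/2) = 2 ^ ν := by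
      rw [← Real.rpow_add two_pos]; congr 1; ring
    have hAB : (2:ℝ) ^ (ν/2) * (2:ℝ) ^ ((ν - 2)/2) = 2 ^ ν / 2 := by
      rw [← Real.rpow_add two_pos, show ν/2 + (ν - 2)/2 = ν - 1 by ring,
        Real.rpow_sub two_pos, Real.rpow_one]
    have hpow : (0:ℝ) < 2 ^ ν := Real.rpow_pos_of_pos two_pos ν
    have h81 : (0:ℝ) < 1 - 8/ν := by
      rw [sub_pos, div_lt_one hν0]; exact hν
    nlinarith [mul_pos h81 hpow, hA2, hAB]
  have lim1 : Tendsto (gadm ν) (nhdsWithin 1 s) atBot := by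
    have hE : Tendsto (fun z : ℝ => (1 - z ^ 2) ^ ((2 - ν)/2)) (nhdsWithin 1 s) atTop := by
      have h1z : Tendsto (fun z : ℝ => 1 - z ^ 2) (nhdsWithin 1 s) (nhdsWithin 0 (Ioi 0)) := by
        rw [tendsto_nhdsWithin_iff]
        constructor
        · have hc : ContinuousAt (fun z : ℝ => 1 - z ^ 2) 1 := by fun_prop
          have h : Tendsto (fun z : ℝ => 1 - z ^ 2) (nhdsWithin 1 s)
              (𝓝 (1 - (1:ℝ) ^ 2)) := hc.tendsto.mono_left nhdsWithin_le_nhds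
          simpa using h
        · filter_upwards [eventually_mem_nhdsWithin] with z hz
          exact (hfacts z hz).2.2.2.1
      exact (rpow_neg_exp_tendsto_atTop (by linarith : (2 - ν)/2 < 0)).comp h1z
    have hD : Tendsto D (nhdsWithin 1 s) (𝓝 (D 1)) :=
      hDc.tendsto.mono_left nhdsWithin_le_nhds
    have hG : Tendsto (fun z : ℝ => D z * (1 - z ^ 2) ^ ((2 - ν)/2) + -(ν/4))
        (nhdsWithin 1 s) atBot :=
      tendsto_atBot_add_const_right _ _ (Tendsto.neg_mul_atTop hL hD hE)
    refine hG.congr' ?_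
    filter_upwards [eventually_mem_nhdsWithin] with z hz
    obtain ⟨hz0, hz1, h1pz, h1z2, hden⟩ := hfacts z hz
    have hw0 : (0:ℝ) < 2 * z / (1 + z ^ 2) := (wmap_mem hz).1
    -- square of the rpow factor
    have hsq : ((1 - z ^ 2) ^ ((2 - ν)/4)) ^ 2 = (1 - z ^ 2) ^ ((2 - ν)/2) := by
      rw [← Real.rpow_natCast ((1 - z ^ 2) ^ ((2 - ν)/4)) 2, ← Real.rpow_mul h1z2.le]
      congr 1
      push_cast; ring
    have hA : (8/ν) * (fadm ν z) ^ 2 = 8/ν * Q z ^ 2 * (1 - z ^ 2) ^ ((2 - ν)/2) := by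
      simp only [fadm, hQdef, mul_pow]
      rw [hsq]; ring
    -- the outer interaction factor
    have hw2 : 1 - (2 * z / (1 + z ^ 2)) ^ 2 = ((1 - z ^ 2) / (1 + z ^ 2)) ^ 2 := by
      field_simp; ring
    have hpow2 : (((1 - z ^ 2) / (1 + z ^ 2)) ^ 2) ^ ((2 - ν)/4)
        = ((1 - z ^ 2) / (1 + z ^ 2)) ^ ((2 - ν)/2) := by
      rw [← Real.rpow_natCast ((1 - z ^ 2) / (1 + z ^ 2)) 2,
        ← Real.rpow_mul (div_nonneg h1z2.le hden.le)]
      congr 1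
      push_cast; ring
    have hinv : (1 + z ^ 2) ^ ((ν - 2)/2) = ((1 + z ^ 2) ^ ((2 - ν)/2))⁻¹ := by
      rw [show (ν - 2)/2 = -((2 - ν)/2) by ring, Real.rpow_neg hden.le]
    have hCpos : (0:ℝ) < (1 + z ^ 2) ^ ((2 - ν)/2) := Real.rpow_pos_of_pos hden _
    have hB : fadm ν (2 * z / (1 + z ^ 2))
        = Q (2 * z / (1 + z ^ 2)) * (1 + z ^ 2) ^ ((ν - 2)/2) * (1 - z ^ 2) ^ ((2 - ν)/2) := by
      simp only [fadm, hQdef, hw2]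
      rw [hpow2, Real.div_rpow h1z2.le hden.le, hinv]
      field_simp
    simp only [hDdef, gadm]
    rw [hA, hB]
    ring
  -- pick points where gadm is positive / negative
  have hne0 : (nhdsWithin (0:ℝ) s).NeBot := by
    apply mem_closure_iff_nhdsWithin_neBot.mp
    rw [hs, closure_Ioo (by norm_num : (0:ℝ) ≠ 1)]
    exact ⟨le_refl 0, by norm_num⟩
  have hne1 : (nhdsWithin (1:ℝ) s).NeBot := by
    apply mem_closure_iff_nhdsWithin_neBot.mp
    rw [hs, closure_Ioo (by norm_num : (0:ℝ) ≠ 1)]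
    exact ⟨by norm_num, le_refl 1⟩
  obtain ⟨a, ha_pos, ha_half, haI⟩ :=
    ((lim0.eventually_gt_atTop 0).and
      ((Eventually.filter_mono nhdsWithin_le_nhds
          (eventually_lt_nhds (by norm_num : (0:ℝ) < 1/2))).and
        eventually_mem_nhdsWithin)).exists
  obtain ⟨b, hb_neg, hb_half, hbI⟩ :=
    ((lim1.eventually_lt_atBot 0).and
      ((Eventually.filter_mono nhdsWithin_le_nhds
          (eventually_gt_nhds (by norm_num : (1:ℝ)/2 < 1))).and
        eventually_mem_nhdsWithin)).exists
  -- intermediate value theorem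
  have hab : a ≤ b := le_of_lt (lt_trans ha_half hb_half)
  have hsub : Icc a b ⊆ s := by
    rw [hs]
    exact Icc_subset_Ioo haI.1 hbI.2
  obtain ⟨z, hzmem, hz0⟩ := intermediate_value_Icc' hab (cont_g.mono hsub)
    ⟨le_of_lt hb_neg, le_of_lt ha_pos⟩
  exact ⟨z, hsub hzmem, hz0⟩

end
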